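/- Let $N \in \mathbb{Q}^{m \times n}$, let $V \in \{0,1\}^{m \times u}$ be a matrix in which every column contains exactly one $1$ and every row contains at least one $1$, let $E \in \mathbb{Q}^{v \times n}$, let $L \in \mathbb{Q}^{r \times m}$ have nonnegative entries, and for each $k \in \{1,\dots,r\}$ let $M(k) \in \mathbb{Q}^{u \times v}$. Suppose that $\mathrm{diag}(L^{T}\mathbb{1}) = V V^{T}$ and that $\mathrm{diag}(L_{k,:})\, N = V\, M(k)\, E$ for every $k \in \{1,\dots,r\}$. Then, setting $M := \sum_{k=1}^{r} M(k)$, one has $N = (V V^{T})^{-1} V M E = \mathrm{diag}(L^{T}\mathbb{1})^{-1} \sum_{k=1}^{r} \mathrm{diag}(L_{k,:})\, N$. -/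
import Mathlib


open Matrix

/-- Equivalence of the moiety graph decomposition and the conserved moiety
splitting of a stoichiometric matrix. -/
theorem stmt_8 (m n u v r : ℕ)
    (N : Matrix (Fin m) (Fin n) ℚ)
    (V : Matrix (Fin m) (Fin u) ℚ)
    (hV01 : ∀ i j, V i j = 0 ∨ V i j = 1)
    (hVcol : ∀ j : Fin u, ∃! i : Fin m, V i j = 1)
    (hVrow : ∀ i : Fin m, ∃ j : Fin u, V i j = 1)
    (E : Matrix (Fin v) (Fin n) ℚ)
    (L : Matrix (Fin r) (Fin m) ℚ)
    (hL : ∀ k i, 0 ≤ L k i)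
    (M : Fin r → Matrix (Fin u) (Fin v) ℚ)
    (hdiag : Matrix.diagonal (Lᵀ *ᵥ (1 : Fin r → ℚ)) = V * Vᵀ)
    (hk : ∀ k : Fin r, Matrix.diagonal (L k) * N = V * M k * E) :
    N = (V * Vᵀ)⁻¹ * (V * (∑ k : Fin r, M k) * E) ∧
      N = (Matrix.diagonal (Lᵀ *ᵥ (1 : Fin r → ℚ)))⁻¹ *
        ∑ k : Fin r, Matrix.diagonal (L k) * N := by
  set d : Fin m → ℚ := Lᵀ *ᵥ (1 : Fin r → ℚ) with hd
  have hdne : ∀ i, d i ≠ 0 := by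
    intro i
    have h1 : d i = (V * Vᵀ) i i := by
      have := congrFun (congrFun hdiag i) i
      simpa [Matrix.diagonal] using this
    have h2 : (V * Vᵀ) i i = ∑ j, V i j * V i j := by
      simp [Matrix.mul_apply, Matrix.transpose_apply]
    obtain ⟨j0, hj0⟩ := hVrow i
    have hle : (1 : ℚ) ≤ ∑ j, V i j * V i j := by
      have : V i j0 * V i j0 = 1 := by rw [hj0]; ring
      calc (1 : ℚ) = V i j0 * V i j0 := this.symm
        _ ≤ ∑ j, V i j * V i j := by
          apply Finset.single_le_sum (f := fun j => V i j * V i j)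
          · intro j _
            rcases hV01 i j with h | h <;> simp [h]
          · simp
    rw [h1, h2]
    intro hzero
    rw [hzero] at hle
    linarith
  have hdiagsum : Matrix.diagonal d = ∑ k : Fin r, Matrix.diagonal (L k) := by
    ext i j
    by_cases h : i = j
    · subst h
      simp [Matrix.sum_apply, Matrix.diagonal_apply_eq, hd, Matrix.mulVec, dotProduct,
        Matrix.transpose_apply]
    · simp [Matrix.sum_apply, Matrix.diagonal_apply_ne _ h, h]
  have hsum : Matrix.diagonal d * N = V * (∑ k : Fin r, M k) * E := by
    rw [hdiagsum, Matrix.sum_mul]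
    calc (∑ k : Fin r, Matrix.diagonal (L k) * N)
        = ∑ k : Fin r, V * M k * E := Finset.sum_congr rfl fun k _ => hk k
      _ = ∑ k : Fin r, V * (M k * E) := by simp [Matrix.mul_assoc]
      _ = V * ∑ k : Fin r, (M k * E) := by rw [Matrix.mul_sum]
      _ = V * ((∑ k : Fin r, M k) * E) := by rw [Matrix.sum_mul]
      _ = _ := by rw [Matrix.mul_assoc]
  have hdet : IsUnit (Matrix.diagonal d).det := by
    rw [Matrix.det_diagonal]
    exact isUnit_iff_ne_zero.mpr (Finset.prod_ne_zero_iff.mpr fun i _ => hdne i)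
  have hinv : (Matrix.diagonal d)⁻¹ * Matrix.diagonal d = 1 :=
    Matrix.nonsing_inv_mul _ hdet
  constructor
  · rw [← hdiag, ← hsum, ← Matrix.mul_assoc, hinv, Matrix.one_mul]
  · have : (∑ k : Fin r, Matrix.diagonal (L k) * N) = Matrix.diagonal d * N := by
      rw [hdiagsum, Matrix.sum_mul]
    rw [this, ← Matrix.mul_assoc, hinv, Matrix.one_mul]
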